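/- arXiv:2212.00696 — 4 statements merged into one kernel-verified Lean document; each statement's English description precedes it below -/
import Mathlib

section
/- With the same ring decomposition as above, Σ_{i,j} |X_{i,j}| · diam(X_{i,j}) ≤ 6 · Σ_{p∈X} d(p,A), since every ring X_{i,j} has diameter at most 2·2^j·R. -/
/-- The ring `X_{i,j}`: points of `X` whose nearest center (given by `c`) is `a`, at
distance in `(2^{j-1} R, 2^j R]` from `a` (distance `≤ R` for `j = 0`). -/
noncomputable def ringSet {Γ : Type*} [MetricSpace Γ] [DecidableEq Γ] (X : Finset Γ) (c : Γ → Γ)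
    (R : ℝ) (a : Γ) (j : ℕ) : Finset Γ :=
  X.filter (fun p => c p = a ∧ dist p a ≤ 2 ^ j * R ∧ (j = 0 ∨ 2 ^ (j - 1) * R < dist p a))

lemma ringSet_disjoint {Γ : Type*} [MetricSpace Γ] [DecidableEq Γ] (X : Finset Γ) (c : Γ → Γ)
    (R : ℝ) (hR0 : 0 ≤ R) {a a' : Γ} {j j' : ℕ} (h : (a, j) ≠ (a', j')) :
    Disjoint (ringSet X c R a j) (ringSet X c R a' j') := by
  rw [Finset.disjoint_left]
  intro p hp hp'
  simp only [ringSet, Finset.mem_filter] at hp hp'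
  obtain ⟨-, hca, hle, hor⟩ := hp
  obtain ⟨-, hca', hle', hor'⟩ := hp'
  have ha : a = a' := hca ▸ hca'
  subst ha
  have hj : j ≠ j' := by simpa using h
  -- wlog j < j'
  have key : ∀ j j' : ℕ, j < j' → dist p a ≤ 2 ^ j * R →
      (j' = 0 ∨ 2 ^ (j' - 1) * R < dist p a) → False := by
    intro k k' hkk' hle hor
    rcases hor with h0 | hgt
    · omega
    · have h2 : (2:ℝ) ^ k ≤ 2 ^ (k' - 1) := by
        apply pow_le_pow_right₀ (by norm_num)
        omega
      have := mul_le_mul_of_nonneg_right h2 hR0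
      linarith
  rcases lt_or_gt_of_ne hj with hlt | hlt
  · exact key j j' hlt hle hor'
  · exact key j' j hlt hle' hor

theorem stmt7 {Γ : Type*} [MetricSpace Γ] [DecidableEq Γ] (X A : Finset Γ)
    (hX : X.Nonempty) (hA : A.Nonempty) (τ : ℝ) (hτ : 1 ≤ τ) (c : Γ → Γ)
    (hc : ∀ p ∈ X, c p ∈ A ∧ dist p (c p) = Metric.infDist p (A : Set Γ)) (R : ℝ)
    (hR : R = (∑ p ∈ X, Metric.infDist p (A : Set Γ)) / (τ * X.card)) (J : ℕ) :
    ∑ a ∈ A, ∑ j ∈ Finset.range J,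
        ((ringSet X c R a j).card : ℝ) * Metric.diam ((ringSet X c R a j : Set Γ)) ≤
      6 * ∑ p ∈ X, Metric.infDist p (A : Set Γ) := by
  classical
  set S := ∑ p ∈ X, Metric.infDist p (A : Set Γ) with hS
  have hS0 : 0 ≤ S := Finset.sum_nonneg fun p _ => Metric.infDist_nonneg
  have hn : (0:ℝ) < X.card := by exact_mod_cast Finset.card_pos.mpr hX
  have hτ0 : (0:ℝ) < τ := lt_of_lt_of_le zero_lt_one hτ
  have hR0 : 0 ≤ R := by rw [hR]; positivity
  have hRn : R * X.card ≤ S := by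
    have : R * X.card = S / τ := by
      rw [hR]; field_simp
    rw [this]
    calc S / τ ≤ S / 1 := by
          apply div_le_div_of_nonneg_left hS0 zero_lt_one hτ  -- maybe wrong lemma
        _ = S := div_one S
  set w : Γ → ℝ := fun p => 2 * R + 4 * Metric.infDist p (A : Set Γ) with hw
  -- per-ring bound
  have hterm : ∀ a ∈ A, ∀ j ∈ Finset.range J,
      ((ringSet X c R a j).card : ℝ) * Metric.diam ((ringSet X c R a j : Set Γ)) ≤
        ∑ p ∈ ringSet X c R a j, w p := by
    intro a _ j _
    have hsub : (ringSet X c R a j : Set Γ) ⊆ Metric.closedBall a (2 ^ j * R) := by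
      intro p hp
      simp only [ringSet, Finset.coe_filter, Set.mem_setOf_eq] at hp
      exact Metric.mem_closedBall.mpr hp.2.2.1
    have hdiam : Metric.diam ((ringSet X c R a j : Set Γ)) ≤ 2 * (2 ^ j * R) := by
      calc Metric.diam ((ringSet X c R a j : Set Γ))
          ≤ Metric.diam (Metric.closedBall a (2 ^ j * R)) :=
            Metric.diam_mono hsub Metric.isBounded_closedBall
        _ ≤ 2 * (2 ^ j * R) := Metric.diam_closedBall (by positivity)
    calc ((ringSet X c R a j).card : ℝ) * Metric.diam ((ringSet X c R a j : Set Γ))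
        ≤ ((ringSet X c R a j).card : ℝ) * (2 * (2 ^ j * R)) := by
          apply mul_le_mul_of_nonneg_left hdiam (by positivity)
      _ = ∑ p ∈ ringSet X c R a j, 2 * (2 ^ j * R) := by
          rw [Finset.sum_const, nsmul_eq_mul]
      _ ≤ ∑ p ∈ ringSet X c R a j, w p := by
          apply Finset.sum_le_sum
          intro p hp
          simp only [ringSet, Finset.mem_filter] at hp
          obtain ⟨hpX, hca, hle, hor⟩ := hp
          have hinf : 0 ≤ Metric.infDist p (A : Set Γ) := Metric.infDist_nonneg
          rcases hor with h0 | hgt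
          · subst h0; simp only [hw]; norm_num; linarith
          · have hd : Metric.infDist p (A : Set Γ) = dist p a := by
              rw [← (hc p hpX).2, hca]
            have h2 : (2:ℝ) * (2 ^ j * R) = 4 * (2 ^ (j-1) * R) := by
              rcases Nat.eq_zero_or_pos j with h | h
              · exfalso; subst h
                simp only [pow_zero, one_mul, Nat.zero_sub] at hgt hle
                linarith
              · obtain ⟨k, rfl⟩ : ∃ k, j = k + 1 := ⟨j - 1, by omega⟩
                simp only [Nat.add_sub_cancel, pow_succ]; ring
            rw [h2, hw]
            simp only
            have : 2 ^ (j-1) * R < Metric.infDist p (A : Set Γ) := hd ▸ hgt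
            linarith
  -- sum bound via disjointness
  have hsum : ∑ a ∈ A, ∑ j ∈ Finset.range J, ∑ p ∈ ringSet X c R a j, w p ≤
      ∑ p ∈ X, w p := by
    rw [← Finset.sum_product']
    rw [← Finset.sum_biUnion]
    · apply Finset.sum_le_sum_of_subset_of_nonneg
      · intro p hp
        simp only [Finset.mem_biUnion] at hp
        obtain ⟨q, -, hq⟩ := hp
        simp only [ringSet, Finset.mem_filter] at hq
        exact hq.1
      · intro p _ _
        simp only [hw]
        have : 0 ≤ Metric.infDist p (A : Set Γ) := Metric.infDist_nonneg
        linarith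
    · intro q hq q' hq' hne
      exact ringSet_disjoint X c R hR0 (by simpa using hne)
  have hwsum : ∑ p ∈ X, w p ≤ 6 * S := by
    simp only [hw]
    rw [Finset.sum_add_distrib, Finset.sum_const, nsmul_eq_mul, ← Finset.mul_sum, ← hS]
    have h1 : (X.card : ℝ) * (2 * R) = 2 * (R * X.card) := by ring
    nlinarith [hRn]
  calc ∑ a ∈ A, ∑ j ∈ Finset.range J,
        ((ringSet X c R a j).card : ℝ) * Metric.diam ((ringSet X c R a j : Set Γ))
      ≤ ∑ a ∈ A, ∑ j ∈ Finset.range J, ∑ p ∈ ringSet X c R a j, w p := by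
        apply Finset.sum_le_sum
        intro a ha
        exact Finset.sum_le_sum (hterm a ha)
    _ ≤ ∑ p ∈ X, w p := hsum
    _ ≤ 6 * S := hwsum
end

section
/- Let X be a finite set partitioned into groups X_{i,j}, let C be a nonempty finite center set, let Y be the set of the m points of X farthest from C, and let L be the collection of indices (i,j) with |X_{i,j}| ≥ 2m. Then Σ_{(i,j)∈L} |X_{i,j}| · d(X_{i,j},C) ≤ 2 · cost_m(X,C), where cost_m(X,C) is the sum of the |X|−m smallest distances d(p,C) over p ∈ X and d(X_{i,j},C) := min_{p∈X_{i,j}} d(p,C). -/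
/-- If two multisets have equal cardinality and every element of `E` is at most
every element of `D`, then `E.sum ≤ D.sum`. -/
lemma pair_sum_aux (E : Multiset ℝ) : ∀ (D : Multiset ℝ), E.card = D.card →
    (∀ e ∈ E, ∀ d ∈ D, e ≤ d) → E.sum ≤ D.sum := by
  induction E using Multiset.induction with
  | empty => intro D h _; simp at h; simp [← h, Multiset.card_eq_zero.mp h.symm]
  | cons a E ih =>
    intro D hcard hle
    have hD : D ≠ 0 := by
      intro h; rw [h] at hcard; simp at hcard
    obtain ⟨d, hd⟩ := Multiset.exists_mem_of_ne_zero hD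
    have hD' : D = d ::ₘ D.erase d := (Multiset.cons_erase hd).symm
    rw [hD', Multiset.sum_cons, Multiset.sum_cons]
    have h1 : a ≤ d := hle a (Multiset.mem_cons_self a E) d hd
    have h2 : E.sum ≤ (D.erase d).sum := by
      apply ih
      · have := hcard; rw [hD'] at this; simpa using this
      · intro e he d' hd'
        exact hle e (Multiset.mem_cons_of_mem he) d' (Multiset.mem_of_mem_erase hd')
    linarith

/-- If `S ≤ A + B` with `S.card = A.card` and every element of `A` is at most
every element of `B`, then `A.sum ≤ S.sum`. -/
lemma min_sum_aux (A B S : Multiset ℝ) (hS : S ≤ A + B) (hcard : S.card = A.card)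
    (hAB : ∀ a ∈ A, ∀ b ∈ B, a ≤ b) : A.sum ≤ S.sum := by
  have hSA : S - A + S ⊓ A = S := Multiset.sub_add_inter S A
  have hAS : A - S + A ⊓ S = A := Multiset.sub_add_inter A S
  have hinter : S ⊓ A = A ⊓ S := Multiset.inter_comm S A
  have hcards : (A - S).card = (S - A).card := by
    have c1 : (S - A).card + (S ⊓ A).card = S.card := by rw [← Multiset.card_add, hSA]
    have c2 : (A - S).card + (A ⊓ S).card = A.card := by rw [← Multiset.card_add, hAS]
    rw [hinter] at c1
    omega
  have hDB : S - A ≤ B := by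
    rw [Multiset.sub_le_iff_le_add]
    rwa [add_comm] at hS
  have hsum : (A - S).sum ≤ (S - A).sum := by
    apply pair_sum_aux _ _ hcards
    intro e he d hd
    exact hAB e (Multiset.mem_of_le (tsub_le_self) he) d (Multiset.mem_of_le hDB hd)
  calc A.sum = (A - S).sum + (A ⊓ S).sum := by rw [← Multiset.sum_add, hAS]
    _ ≤ (S - A).sum + (S ⊓ A).sum := by rw [hinter]; linarith
    _ = S.sum := by rw [← Multiset.sum_add, hSA]

/-- `sumNSmallest T j` is a lower bound wrt the described structure. -/
lemma sumNSmallest_ge (A B : Multiset ℝ) (j : ℕ) (hj : j = A.card)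
    (hAB : ∀ a ∈ A, ∀ b ∈ B, a ≤ b) :
    A.sum ≤ ((((A + B).sort (· ≤ ·)).take j : List ℝ) : Multiset ℝ).sum := by
  set T := A + B with hT
  have hjT : j ≤ T.card := by rw [hj, hT]; simp
  set S : Multiset ℝ := (((T.sort (· ≤ ·)).take j : List ℝ) : Multiset ℝ) with hSdef
  have hSle : S ≤ T := by
    have h1 : List.Subperm ((T.sort (· ≤ ·)).take j) (T.sort (· ≤ ·)) :=
      (List.take_sublist _ _).subperm
    calc S ≤ ((T.sort (· ≤ ·) : List ℝ) : Multiset ℝ) := h1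
      _ = T := Multiset.sort_eq _ _
  have hScard : S.card = A.card := by
    rw [hSdef]
    simp only [Multiset.coe_card, List.length_take, Multiset.length_sort]
    omega
  exact min_sum_aux A B S hSle hScard hAB

/-- Sum of the `j` smallest elements of a finite multiset of reals. -/
noncomputable def sumNSmallest (T : Multiset ℝ) (j : ℕ) : ℝ :=
  ((T.sort (· ≤ ·)).take j).sum

/-- Sum of the `|X| - m` smallest distances of points of `X` to the center set `C`. -/
noncomputable def costm {Γ : Type*} [MetricSpace Γ] (m : ℕ) (X : Finset Γ) (C : Set Γ) : ℝ :=
  sumNSmallest (X.val.map fun p => Metric.infDist p C) (X.card - m)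

theorem stmt8 {Γ : Type*} {ι : Type*} [MetricSpace Γ] [DecidableEq Γ]
    (X : Finset Γ) (C : Finset Γ) (hC : C.Nonempty) (m : ℕ) (hm : m ≤ X.card)
    (I : Finset ι) (parts : ι → Finset Γ)
    (hdisj : ∀ i ∈ I, ∀ j ∈ I, i ≠ j → Disjoint (parts i) (parts j))
    (hcover : X = I.biUnion parts)
    (Y : Finset Γ) (hYX : Y ⊆ X) (hYcard : Y.card = m)
    (hfar : ∀ y ∈ Y, ∀ x ∈ X \ Y,
      Metric.infDist x (C : Set Γ) ≤ Metric.infDist y (C : Set Γ)) :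
    ∑ i ∈ I.filter (fun i => 2 * m ≤ (parts i).card),
        ((parts i).card : ℝ) * sInf ((fun p => Metric.infDist p (C : Set Γ)) '' (parts i)) ≤
      2 * costm m X (C : Set Γ) := by
  set f : Γ → ℝ := fun p => Metric.infDist p (C : Set Γ) with hf
  have hf0 : ∀ p, 0 ≤ f p := fun p => Metric.infDist_nonneg
  -- Step 1 : ∑ over X \ Y ≤ costm
  have hval : X.val = (X \ Y).val + Y.val := by
    have hY : Y.val ≤ X.val := Finset.val_le_iff.mpr hYX
    rw [Finset.sdiff_val]
    exact (tsub_add_cancel_of_le hY).symm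
  have hAcard : X.card - m = ((X \ Y).val.map f).card := by
    rw [Multiset.card_map, ← Finset.card_def, Finset.card_sdiff_of_subset hYX, hYcard]
  have hAB : ∀ a ∈ (X \ Y).val.map f, ∀ b ∈ Y.val.map f, a ≤ b := by
    intro a ha b hb
    obtain ⟨x, hx, rfl⟩ := Multiset.mem_map.mp ha
    obtain ⟨y, hy, rfl⟩ := Multiset.mem_map.mp hb
    exact hfar y hy x hx
  have hcost : ∑ p ∈ X \ Y, f p ≤ costm m X (C : Set Γ) := by
    have := sumNSmallest_ge ((X \ Y).val.map f) (Y.val.map f) (X.card - m) hAcard hAB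
    rw [Finset.sum_eq_multiset_sum]
    unfold costm sumNSmallest
    rw [hval, Multiset.map_add]
    exact this
  -- Step 2
  set L := I.filter (fun i => 2 * m ≤ (parts i).card) with hL
  have hparts_sub : ∀ i ∈ I, parts i ⊆ X := by
    intro i hi
    rw [hcover]
    exact fun x hx => Finset.mem_biUnion.mpr ⟨i, hi, hx⟩
  have key : ∀ i ∈ L, ((parts i).card : ℝ) * sInf (f '' (parts i)) ≤
      2 * ∑ p ∈ parts i \ Y, f p := by
    intro i hi
    rw [hL, Finset.mem_filter] at hi
    obtain ⟨hiI, him⟩ := hi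
    set d := sInf (f '' (parts i)) with hd
    have hd0 : 0 ≤ d := Real.sInf_nonneg (by rintro x ⟨p, _, rfl⟩; exact hf0 p)
    have hbdd : BddBelow (f '' (parts i)) := ⟨0, by rintro x ⟨p, _, rfl⟩; exact hf0 p⟩
    have hdle : ∀ p ∈ parts i \ Y, d ≤ f p := by
      intro p hp
      exact csInf_le hbdd ⟨p, Finset.mem_sdiff.mp hp |>.1, rfl⟩
    have hcard2 : (parts i).card ≤ 2 * (parts i \ Y).card := by
      have h1 : (parts i ∩ Y).card ≤ m := by
        calc (parts i ∩ Y).card ≤ Y.card := Finset.card_le_card (Finset.inter_subset_right)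
          _ = m := hYcard
      have h2 : (parts i \ Y).card + (parts i ∩ Y).card = (parts i).card :=
        Finset.card_sdiff_add_card_inter _ _
      omega
    have hsum : ((parts i \ Y).card : ℝ) * d ≤ ∑ p ∈ parts i \ Y, f p := by
      have := Finset.card_nsmul_le_sum (parts i \ Y) f d hdle
      simpa [nsmul_eq_mul] using this
    calc ((parts i).card : ℝ) * d ≤ (2 * (parts i \ Y).card : ℕ) * d := by
          apply mul_le_mul_of_nonneg_right _ hd0
          exact_mod_cast hcard2
      _ = 2 * (((parts i \ Y).card : ℝ) * d) := by push_cast; ring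
      _ ≤ 2 * ∑ p ∈ parts i \ Y, f p := by linarith
  have step2 : ∑ i ∈ L, ((parts i).card : ℝ) * sInf (f '' (parts i)) ≤
      2 * ∑ p ∈ X \ Y, f p := by
    calc ∑ i ∈ L, ((parts i).card : ℝ) * sInf (f '' (parts i))
        ≤ ∑ i ∈ L, 2 * ∑ p ∈ parts i \ Y, f p := Finset.sum_le_sum key
      _ = 2 * ∑ i ∈ L, ∑ p ∈ parts i \ Y, f p := by rw [Finset.mul_sum]
      _ = 2 * ∑ p ∈ L.biUnion (fun i => parts i \ Y), f p := by
          rw [Finset.sum_biUnion]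
          intro a ha b hb hab
          have haI : a ∈ I := (Finset.mem_filter.mp ha).1
          have hbI : b ∈ I := (Finset.mem_filter.mp hb).1
          exact Finset.disjoint_of_subset_left (Finset.sdiff_subset)
            (Finset.disjoint_of_subset_right (Finset.sdiff_subset) (hdisj a haI b hbI hab))
      _ ≤ 2 * ∑ p ∈ X \ Y, f p := by
          apply mul_le_mul_of_nonneg_left _ (by norm_num)
          apply Finset.sum_le_sum_of_subset_of_nonneg
          · intro p hp
            obtain ⟨i, hi, hpi⟩ := Finset.mem_biUnion.mp hp
            have hiI : i ∈ I := (Finset.mem_filter.mp hi).1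
            obtain ⟨hp1, hp2⟩ := Finset.mem_sdiff.mp hpi
            exact Finset.mem_sdiff.mpr ⟨hparts_sub i hiI hp1, hp2⟩
          · intro p _ _; exact hf0 p
  calc ∑ i ∈ L, ((parts i).card : ℝ) * sInf (f '' (parts i))
      ≤ 2 * ∑ p ∈ X \ Y, f p := step2
    _ ≤ 2 * costm m X (C : Set Γ) := by linarith
end

section
/- Let X be a finite set partitioned into disjoint groups X_1, …, X_r, let C be a nonempty finite center set, and 0 ≤ m ≤ |X|. Then cost_m(X, C) = min over nonnegative integers m_1, …, m_r with Σ_i m_i = m and m_i ≤ |X_i| of Σ_i cost_{m_i}(X_i, C), where cost_t(S,C) denotes the sum of the |S|−t smallest values of d(p,C) over p ∈ S. -/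
private lemma take_sum_le_aux {s t : List ℝ} (hst : s.Sublist t) :
    t.Pairwise (· ≤ ·) → ∀ n, n ≤ s.length → (t.take n).sum ≤ (s.take n).sum := by
  induction hst with
  | slnil =>
    intro _ n hn
    have : n = 0 := by simpa using hn
    subst this
    simp
  | @cons l₁ l₂ a h ih =>
    intro ht n hn
    rcases n with _ | n'
    · simp
    · have h1 : n' + 1 ≤ l₂.length := hn.trans h.length_le
      have hlt : n' < l₂.length := h1
      have ha : a ≤ l₂.get ⟨n', hlt⟩ :=
        List.rel_of_pairwise_cons ht (List.get_mem l₂ ⟨n', hlt⟩)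
      have step : a + (l₂.take n').sum ≤ (l₂.take (n' + 1)).sum := by
        rw [List.sum_take_succ l₂ n' hlt]
        have : l₂[n'] = l₂.get ⟨n', hlt⟩ := rfl
        rw [this]
        linarith
      have ih' := ih ht.of_cons (n' + 1) hn
      calc ((a :: l₂).take (n' + 1)).sum = a + (l₂.take n').sum := by
            rw [List.take_succ_cons, List.sum_cons]
        _ ≤ (l₂.take (n' + 1)).sum := step
        _ ≤ (l₁.take (n' + 1)).sum := ih'
  | @cons_cons l₁ l₂ a h ih =>
    intro ht n hn
    rcases n with _ | n'
    · simp
    · simp only [List.take_succ_cons, List.sum_cons]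
      have := ih ht.of_cons n' (Nat.succ_le_succ_iff.mp hn)
      linarith

private lemma sumNSmallest_le_sum {S T : Multiset ℝ} (h : S ≤ T) :
    sumNSmallest T (Multiset.card S) ≤ S.sum := by
  set s := S.sort (· ≤ ·) with hs
  set t := T.sort (· ≤ ·) with htdef
  have hcoe : (↑s : Multiset ℝ) ≤ (↑t : Multiset ℝ) := by
    rw [hs, htdef, Multiset.sort_eq, Multiset.sort_eq]; exact h
  have hsp : s.Subperm t := Multiset.coe_le.mp hcoe
  have hsl : s.Sublist t :=
    List.sublist_of_subperm_of_pairwise hsp (Multiset.pairwise_sort _ _) (Multiset.pairwise_sort _ _)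
  have hcard : s.length = Multiset.card S := Multiset.length_sort _
  have key := take_sum_le_aux hsl (Multiset.pairwise_sort _ _) s.length le_rfl
  rw [List.take_length] at key
  have hSsum : S.sum = s.sum := by
    rw [hs, ← Multiset.sum_coe, Multiset.sort_eq]
  rw [hSsum]
  unfold sumNSmallest
  rw [← hcard]
  exact key

private lemma exists_sub_sum_eq (T : Multiset ℝ) (j : ℕ) (hj : j ≤ Multiset.card T) :
    ∃ S : Multiset ℝ, S ≤ T ∧ Multiset.card S = j ∧ S.sum = sumNSmallest T j := by
  refine ⟨((T.sort (· ≤ ·)).take j : List ℝ), ?_, ?_, ?_⟩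
  · have : ((T.sort (· ≤ ·)).take j : Multiset ℝ) ≤ ↑(T.sort (· ≤ ·)) :=
      Multiset.coe_le.mpr (List.take_sublist _ _).subperm
    rwa [Multiset.sort_eq] at this
  · simp [List.length_take, Multiset.length_sort, hj]
  · rfl

private lemma le_add_decomp {A B S : Multiset ℝ} (h : S ≤ A + B) :
    ∃ S₁ S₂ : Multiset ℝ, S₁ ≤ A ∧ S₂ ≤ B ∧ S = S₁ + S₂ := by
  classical
  refine ⟨S ∩ A, S - A, Multiset.inter_le_right, ?_, ?_⟩
  · rw [Multiset.sub_le_iff_le_add]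
    exact h.trans (le_of_eq (add_comm A B))
  · ext a
    simp only [Multiset.count_add, Multiset.count_inter, Multiset.count_sub]
    omega

private lemma le_sum_decomp {ι : Type*} (I : Finset ι) (T : ι → Multiset ℝ) :
    ∀ S : Multiset ℝ, S ≤ ∑ i ∈ I, T i →
      ∃ g : ι → Multiset ℝ, (∀ i ∈ I, g i ≤ T i) ∧ S = ∑ i ∈ I, g i := by
  classical
  induction I using Finset.induction with
  | empty =>
    intro S hS
    simp only [Finset.sum_empty, Multiset.le_zero] at hS
    exact ⟨fun _ => 0, by simp, by simp [hS]⟩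
  | @insert a I' ha ih =>
    intro S hS
    rw [Finset.sum_insert ha] at hS
    obtain ⟨S₁, S₂, h1, h2, h12⟩ := le_add_decomp hS
    obtain ⟨g, hg, hgsum⟩ := ih S₂ h2
    refine ⟨Function.update g a S₁, ?_, ?_⟩
    · intro i hi
      rcases Finset.mem_insert.mp hi with rfl | hi'
      · simpa using h1
      · rw [Function.update_of_ne (by rintro rfl; exact ha hi')]
        exact hg i hi'
    · have hupd : ∑ x ∈ I', Function.update g a S₁ x = ∑ x ∈ I', g x :=
        Finset.sum_congr rfl
          (fun i hi => Function.update_of_ne (by rintro rfl; exact ha hi) _ _)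
      rw [Finset.sum_insert ha, Function.update_self, hupd, ← hgsum, h12]

private lemma biUnion_val_eq {ι Γ : Type*} [DecidableEq Γ] (I : Finset ι)
    (parts : ι → Finset Γ) :
    (∀ i ∈ I, ∀ j ∈ I, i ≠ j → Disjoint (parts i) (parts j)) →
      (I.biUnion parts).val = ∑ i ∈ I, (parts i).val := by
  classical
  induction I using Finset.induction with
  | empty => simp
  | @insert a I' ha ih =>
    intro hdisj
    rw [Finset.biUnion_insert, Finset.sum_insert ha]
    have hdis : Disjoint (parts a) (I'.biUnion parts) := by
      rw [Finset.disjoint_biUnion_right]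
      intro j hj
      exact hdisj a (Finset.mem_insert_self a I') j (Finset.mem_insert_of_mem hj)
        (by rintro rfl; exact ha hj)
    have : parts a ∪ I'.biUnion parts = (parts a).disjUnion (I'.biUnion parts) hdis :=
      (Finset.disjUnion_eq_union _ _ _).symm
    rw [this]
    have hval : ((parts a).disjUnion (I'.biUnion parts) hdis).val
        = (parts a).val + (I'.biUnion parts).val := rfl
    rw [hval, ih (fun i hi j hj hij =>
      hdisj i (Finset.mem_insert_of_mem hi) j (Finset.mem_insert_of_mem hj) hij)]

theorem stmt12 {Γ : Type*} {ι : Type*} [MetricSpace Γ] [DecidableEq Γ]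
    (X : Finset Γ) (C : Finset Γ) (hC : C.Nonempty) (m : ℕ) (hm : m ≤ X.card)
    (I : Finset ι) (parts : ι → Finset Γ)
    (hdisj : ∀ i ∈ I, ∀ j ∈ I, i ≠ j → Disjoint (parts i) (parts j))
    (hcover : X = I.biUnion parts) :
    (∃ f : ι → ℕ, (∑ i ∈ I, f i) = m ∧ (∀ i ∈ I, f i ≤ (parts i).card) ∧
      ∑ i ∈ I, costm (f i) (parts i) (C : Set Γ) = costm m X (C : Set Γ)) ∧
    (∀ f : ι → ℕ, (∑ i ∈ I, f i) = m → (∀ i ∈ I, f i ≤ (parts i).card) →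
      costm m X (C : Set Γ) ≤ ∑ i ∈ I, costm (f i) (parts i) (C : Set Γ)) := by
  classical
  set d : Γ → ℝ := fun p => Metric.infDist p (C : Set Γ) with hd
  set T : ι → Multiset ℝ := fun i => (parts i).val.map d with hT
  have hval : X.val = ∑ i ∈ I, (parts i).val := by
    rw [hcover]; exact biUnion_val_eq I parts hdisj
  have hTX : X.val.map d = ∑ i ∈ I, T i := by
    rw [hval]
    exact map_sum (Multiset.mapAddMonoidHom d) (fun i => (parts i).val) I
  have hcardT : ∀ i, Multiset.card (T i) = (parts i).card := by
    intro i; simp [hT]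
  have hcardX : X.card = ∑ i ∈ I, (parts i).card := by
    have := congrArg (Multiset.card) hval
    rwa [Multiset.card_sum I (fun i => (parts i).val)] at this
  -- Part 2 first
  have part2 : ∀ f : ι → ℕ, (∑ i ∈ I, f i) = m → (∀ i ∈ I, f i ≤ (parts i).card) →
      costm m X (C : Set Γ) ≤ ∑ i ∈ I, costm (f i) (parts i) (C : Set Γ) := by
    intro f hsum hle
    have hex : ∀ i ∈ I, ∃ S : Multiset ℝ, S ≤ T i ∧
        Multiset.card S = (parts i).card - f i ∧
        S.sum = sumNSmallest (T i) ((parts i).card - f i) := by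
      intro i hi
      exact exists_sub_sum_eq (T i) ((parts i).card - f i)
        (by rw [hcardT]; omega)
    choose! S hS1 hS2 hS3 using hex
    have hStot_le : (∑ i ∈ I, S i) ≤ ∑ i ∈ I, T i :=
      Finset.sum_le_sum (fun i hi => hS1 i hi)
    have hcardtot : Multiset.card (∑ i ∈ I, S i) = X.card - m := by
      rw [Multiset.card_sum I S]
      have h1 : ∑ i ∈ I, Multiset.card (S i) = ∑ i ∈ I, ((parts i).card - f i) :=
        Finset.sum_congr rfl (fun i hi => hS2 i hi)
      have h2 : ∑ i ∈ I, ((parts i).card - f i) + ∑ i ∈ I, f i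
          = ∑ i ∈ I, (parts i).card := by
        rw [← Finset.sum_add_distrib]
        exact Finset.sum_congr rfl (fun i hi => by have := hle i hi; omega)
      
      omega
    have key : sumNSmallest (X.val.map d) (X.card - m) ≤ (∑ i ∈ I, S i).sum := by
      rw [← hcardtot]
      apply sumNSmallest_le_sum
      rw [hTX]; exact hStot_le
    have hsum2 : (∑ i ∈ I, S i).sum = ∑ i ∈ I, (S i).sum :=
      map_sum Multiset.sumAddMonoidHom S I
    calc costm m X (C : Set Γ) = sumNSmallest (X.val.map d) (X.card - m) := rfl
      _ ≤ (∑ i ∈ I, S i).sum := key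
      _ = ∑ i ∈ I, (S i).sum := hsum2
      _ = ∑ i ∈ I, costm (f i) (parts i) (C : Set Γ) :=
        Finset.sum_congr rfl (fun i hi => by rw [hS3 i hi]; rfl)
  refine ⟨?_, part2⟩
  -- Part 1
  obtain ⟨Stot, hStot_le, hStot_card, hStot_sum⟩ :=
    exists_sub_sum_eq (X.val.map d) (X.card - m) (by rw [Multiset.card_map, ← Finset.card_def]; omega)
  obtain ⟨g, hg_le, hg_sum⟩ := le_sum_decomp I T Stot (by rwa [← hTX])
  have hg_card : ∀ i ∈ I, Multiset.card (g i) ≤ (parts i).card := by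
    intro i hi
    have := Multiset.card_le_card (hg_le i hi)
    rwa [hcardT] at this
  set f : ι → ℕ := fun i => (parts i).card - Multiset.card (g i) with hf
  have hcards : ∑ i ∈ I, Multiset.card (g i) = X.card - m := by
    have := congrArg (Multiset.card) hg_sum
    rw [hStot_card, Multiset.card_sum I g] at this
    simpa using this.symm
  have hfsum : ∑ i ∈ I, f i = m := by
    have h2 : ∑ i ∈ I, f i + ∑ i ∈ I, Multiset.card (g i)
        = ∑ i ∈ I, (parts i).card := by
      rw [← Finset.sum_add_distrib]
      exact Finset.sum_congr rfl (fun i hi => by have := hg_card i hi; simp [hf]; omega)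
    omega
  have hfle : ∀ i ∈ I, f i ≤ (parts i).card := fun i _ => Nat.sub_le _ _
  refine ⟨f, hfsum, hfle, ?_⟩
  have hle2 : ∑ i ∈ I, costm (f i) (parts i) (C : Set Γ) ≤ costm m X (C : Set Γ) := by
    have hterm : ∀ i ∈ I, costm (f i) (parts i) (C : Set Γ) ≤ (g i).sum := by
      intro i hi
      have hcc : (parts i).card - f i = Multiset.card (g i) := by
        have := hg_card i hi; simp [hf]; omega
      calc costm (f i) (parts i) (C : Set Γ)
          = sumNSmallest (T i) ((parts i).card - f i) := rfl
        _ = sumNSmallest (T i) (Multiset.card (g i)) := by rw [hcc]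
        _ ≤ (g i).sum := sumNSmallest_le_sum (hg_le i hi)
    calc ∑ i ∈ I, costm (f i) (parts i) (C : Set Γ)
        ≤ ∑ i ∈ I, (g i).sum := Finset.sum_le_sum hterm
      _ = (∑ i ∈ I, g i).sum := (map_sum Multiset.sumAddMonoidHom g I).symm
      _ = Stot.sum := by rw [← hg_sum]
      _ = costm m X (C : Set Γ) := hStot_sum
  exact le_antisymm hle2 (part2 f hfsum hfle)
end

section
/- Let z ≥ 1 be real, X a finite set of n points in a metric space, A a nonempty finite set of centers, R = (Σ_{p∈X} d(p,A)^z / (τn))^{1/z} with τ ≥ 1, and rings X_{i,j} defined by nearest center c_i ∈ A and annuli of radii 2^{j−1}R to 2^j R (ball of radius R for j = 0). Then Σ_{i,j} |X_{i,j}| · (2^j R)^z ≤ (1 + 2^z) · Σ_{p∈X} d(p,A)^z. -/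
theorem stmt17 {Γ : Type*} [MetricSpace Γ] [DecidableEq Γ] (z : ℝ) (hz : 1 ≤ z)
    (X A : Finset Γ) (hX : X.Nonempty) (hA : A.Nonempty) (τ : ℝ) (hτ : 1 ≤ τ)
    (c : Γ → Γ)
    (hc : ∀ p ∈ X, c p ∈ A ∧ dist p (c p) = Metric.infDist p (A : Set Γ)) (R : ℝ)
    (hR : R = ((∑ p ∈ X, Metric.infDist p (A : Set Γ) ^ z) / (τ * X.card)) ^ (1 / z))
    (J : ℕ) :
    ∑ a ∈ A, ∑ j ∈ Finset.range J, ((ringSet X c R a j).card : ℝ) * (2 ^ j * R) ^ z ≤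
      (1 + (2 : ℝ) ^ z) * ∑ p ∈ X, Metric.infDist p (A : Set Γ) ^ z := by
  classical
  set D : Γ → ℝ := fun p => Metric.infDist p (A : Set Γ) with hDdef
  have hD0 : ∀ p, 0 ≤ D p := fun p => Metric.infDist_nonneg
  have hS0 : 0 ≤ ∑ p ∈ X, D p ^ z :=
    Finset.sum_nonneg fun p _ => Real.rpow_nonneg (hD0 p) z
  have hz0 : z ≠ 0 := by linarith
  have hn : (0:ℝ) < X.card := by
    exact_mod_cast Finset.card_pos.2 hX
  have hR0 : 0 ≤ R := hR ▸ Real.rpow_nonneg (by positivity) _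
  have hRz : R ^ z = (∑ p ∈ X, D p ^ z) / (τ * X.card) := by
    rw [hR, ← Real.rpow_mul (by positivity), one_div_mul_cancel hz0, Real.rpow_one]
  have hRz0 : 0 ≤ R ^ z := Real.rpow_nonneg hR0 _
  -- the "budget" function
  set f : Γ → ℝ := fun p => (2:ℝ) ^ z * D p ^ z + R ^ z with hfdef
  have hf0 : ∀ p, 0 ≤ f p := fun p => by
    have := Real.rpow_nonneg (hD0 p) z
    have h2 : (0:ℝ) ≤ (2:ℝ) ^ z := Real.rpow_nonneg (by norm_num) z
    positivity
  -- pointwise bound on each ring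
  have key : ∀ a ∈ A, ∀ j ∈ Finset.range J, ∀ p ∈ ringSet X c R a j,
      ((2:ℝ) ^ j * R) ^ z ≤ f p := by
    intro a _ j _ p hp
    simp only [ringSet, Finset.mem_filter] at hp
    obtain ⟨hpX, hca, hle, hj⟩ := hp
    have hdist : dist p a = D p := by
      rw [← hca]; exact (hc p hpX).2
    rcases hj with hj | hlt
    · subst hj
      have h1 : ((2:ℝ) ^ 0 * R) ^ z = R ^ z := by norm_num
      rw [h1]
      have h2 : (0:ℝ) ≤ (2:ℝ) ^ z * D p ^ z :=
        mul_nonneg (Real.rpow_nonneg (by norm_num) z) (Real.rpow_nonneg (hD0 p) z)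
      simp only [hfdef]
      linarith
    · -- j ≥ 1 case: 2^j R ≤ 2 * D p
      have hj1 : 1 ≤ j := by
        by_contra h
        interval_cases j
        · simp at hlt
          nlinarith [hD0 p, hdist ▸ hlt, hle]
      have hpow : (2:ℝ) ^ j = 2 * 2 ^ (j - 1) := by
        conv_lhs => rw [show j = (j - 1) + 1 by omega]
        ring
      have hub : (2:ℝ) ^ j * R ≤ 2 * D p := by
        rw [hpow, mul_assoc]
        have := hdist ▸ hlt
        linarith
      have hb0 : (0:ℝ) ≤ 2 ^ j * R := by positivity
      calc ((2:ℝ) ^ j * R) ^ z ≤ (2 * D p) ^ z := Real.rpow_le_rpow hb0 hub (by linarith)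
        _ = (2:ℝ) ^ z * D p ^ z := Real.mul_rpow (by norm_num) (hD0 p)
        _ ≤ f p := by simp only [hfdef]; linarith [hRz0]
  -- each point lies in at most one ring
  have hcard : ∀ p ∈ X,
      (((A ×ˢ Finset.range J).filter (fun x => c p = x.1 ∧ dist p x.1 ≤ 2 ^ x.2 * R ∧
        (x.2 = 0 ∨ 2 ^ (x.2 - 1) * R < dist p x.1))).card : ℝ) ≤ 1 := by
    intro p _
    have h1 : (((A ×ˢ Finset.range J).filter (fun x => c p = x.1 ∧ dist p x.1 ≤ 2 ^ x.2 * R ∧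
        (x.2 = 0 ∨ 2 ^ (x.2 - 1) * R < dist p x.1))).card) ≤ 1 := by
      apply Finset.card_le_one.2
      intro x hx y hy
      simp only [Finset.mem_filter] at hx hy
      obtain ⟨-, hx1, hx2, hx3⟩ := hx
      obtain ⟨-, hy1, hy2, hy3⟩ := hy
      rw [← hx1] at hx2 hx3
      rw [← hy1] at hy2 hy3
      have hjj : ∀ j j' : ℕ, j < j' → dist p (c p) ≤ 2 ^ j * R →
          (j' = 0 ∨ (2:ℝ) ^ (j' - 1) * R < dist p (c p)) → False := by
        intro j j' hlt h1 h2
        rcases h2 with h2 | h2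
        · omega
        · have hle2 : (2:ℝ) ^ j ≤ 2 ^ (j' - 1) :=
            pow_le_pow_right₀ (by norm_num) (by omega)
          nlinarith [mul_le_mul_of_nonneg_right hle2 hR0]
      have he2 : x.2 = y.2 := by
        rcases lt_trichotomy x.2 y.2 with h | h | h
        · exact (hjj x.2 y.2 h hx2 hy3).elim
        · exact h
        · exact (hjj y.2 x.2 h hy2 hx3).elim
      have he1 : x.1 = y.1 := by rw [← hx1, ← hy1]
      exact Prod.ext he1 he2
    exact_mod_cast h1
  -- main chain
  have step1 : ∑ a ∈ A, ∑ j ∈ Finset.range J, ∑ p ∈ ringSet X c R a j, f p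
      = ∑ p ∈ X, ∑ x ∈ A ×ˢ Finset.range J,
          (if c p = x.1 ∧ dist p x.1 ≤ 2 ^ x.2 * R ∧
              (x.2 = 0 ∨ 2 ^ (x.2 - 1) * R < dist p x.1)
           then f p else 0) := by
    simp only [ringSet, Finset.sum_filter]
    rw [← Finset.sum_product', Finset.sum_comm]
  have step2 : ∀ p ∈ X, (∑ x ∈ A ×ˢ Finset.range J,
          (if c p = x.1 ∧ dist p x.1 ≤ 2 ^ x.2 * R ∧
              (x.2 = 0 ∨ 2 ^ (x.2 - 1) * R < dist p x.1)
           then f p else 0)) ≤ f p := by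
    intro p hp
    rw [← Finset.sum_filter, Finset.sum_const, nsmul_eq_mul]
    calc ((Finset.filter _ _).card : ℝ) * f p ≤ 1 * f p :=
          mul_le_mul_of_nonneg_right (hcard p hp) (hf0 p)
      _ = f p := one_mul _
  have hnR : (X.card : ℝ) * R ^ z ≤ ∑ p ∈ X, D p ^ z := by
    rw [hRz]
    have heq : (X.card : ℝ) * ((∑ p ∈ X, D p ^ z) / (τ * X.card)) =
        (∑ p ∈ X, D p ^ z) / τ := by
      field_simp
    rw [heq]
    exact div_le_self hS0 hτ
  calc ∑ a ∈ A, ∑ j ∈ Finset.range J, ((ringSet X c R a j).card : ℝ) * (2 ^ j * R) ^ z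
      ≤ ∑ a ∈ A, ∑ j ∈ Finset.range J, ∑ p ∈ ringSet X c R a j, f p := by
        refine Finset.sum_le_sum fun a ha => Finset.sum_le_sum fun j hj => ?_
        rw [show ((ringSet X c R a j).card : ℝ) * (2 ^ j * R) ^ z
            = ∑ _p ∈ ringSet X c R a j, ((2:ℝ) ^ j * R) ^ z by
          rw [Finset.sum_const, nsmul_eq_mul]]
        exact Finset.sum_le_sum fun p hp => key a ha j hj p hp
    _ = ∑ p ∈ X, ∑ x ∈ A ×ˢ Finset.range J,
          (if c p = x.1 ∧ dist p x.1 ≤ 2 ^ x.2 * R ∧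
              (x.2 = 0 ∨ 2 ^ (x.2 - 1) * R < dist p x.1)
           then f p else 0) := step1
    _ ≤ ∑ p ∈ X, f p := Finset.sum_le_sum step2
    _ = (2:ℝ) ^ z * (∑ p ∈ X, D p ^ z) + (X.card : ℝ) * R ^ z := by
        simp only [hfdef]
        rw [Finset.sum_add_distrib, ← Finset.mul_sum, Finset.sum_const, nsmul_eq_mul]
    _ ≤ (1 + (2:ℝ) ^ z) * ∑ p ∈ X, D p ^ z := by nlinarith [hnR, hS0]
end
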